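/- Let M be a homologically monotonic monomial ideal. Then for every m ≠ 1 in the Betti poset B_M, the reduced homology H̃(Δ_m; k) is concentrated in a single degree: there exists i such that H̃_j(Δ_m; k) = 0 for all j ≠ i and H̃_i(Δ_m; k) ≠ 0. -/

import Mathlib

open scoped Classical

noncomputable section

/-- The faces of cardinality `c` of a simplicial complex `Δ` on vertex set `Fin r`
(encoded as a finite set of finite subsets of `Fin r`). -/
abbrev Face {r : ℕ} (Δ : Finset (Finset (Fin r))) (c : ℕ) : Type :=
  {s : Finset (Fin r) // s ∈ Δ ∧ s.card = c}

/-- The incidence sign of a codimension-one pair of faces: `(−1)^{position}` if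
`t ⊆ s`, and `0` otherwise. -/
def bdryCoef (k : Type*) [Field k] {r : ℕ} (s t : Finset (Fin r)) : k :=
  if t ⊆ s then (-1 : k) ^ ((s \ t).sum fun v => (s.filter fun w => w < v).card) else 0

/-- The boundary map of the (augmented, reduced) simplicial chain complex of `Δ` with
coefficients in `k`, from chains on faces of cardinality `c + 1` (dimension `c`) to
chains on faces of cardinality `c`. -/
def bdry (k : Type*) [Field k] {r : ℕ} (Δ : Finset (Finset (Fin r))) (c : ℕ) :
    (Face Δ (c + 1) → k) →ₗ[k] (Face Δ c → k) :=
  LinearMap.pi fun t => ∑ s : Face Δ (c + 1), bdryCoef k s.1 t.1 • LinearMap.proj s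

/-- Nonvanishing of the reduced homology `H̃_{c−1}(Δ; k)`, i.e. of the homology of the
reduced chain complex at the chains on faces of cardinality `c` (dimension `c − 1`). -/
def HtNonzero (k : Type*) [Field k] {r : ℕ} (Δ : Finset (Finset (Fin r))) : ℕ → Prop
  | 0 => LinearMap.range (bdry k Δ 0) ≠ ⊤
  | c + 1 => LinearMap.ker (bdry k Δ c) ≠ LinearMap.range (bdry k Δ (c + 1))

/-- The atom-support of a multidegree: the indices of generators dividing it. -/
def aSupp {n r : ℕ} (a : Fin r → (Fin n → ℕ)) (v : Fin n → ℕ) : Finset (Fin r) :=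
  Finset.univ.filter fun i => a i ≤ v

/-- The lcm-lattice of the monomial ideal generated by the monomials with exponent
vectors `a i`: all joins (componentwise sups) of subsets of the generators. -/
def latticeL {n r : ℕ} (a : Fin r → (Fin n → ℕ)) : Set (Fin n → ℕ) :=
  {v | ∃ A : Finset (Fin r), v = A.sup a}

/-- `u` is covered by `v` in the lcm-lattice. -/
def covIn {n r : ℕ} (a : Fin r → (Fin n → ℕ)) (u v : Fin n → ℕ) : Prop :=
  u ∈ latticeL a ∧ u < v ∧ ∀ w ∈ latticeL a, ¬(u < w ∧ w < v)

/-- The simplicial complex `Δ_m` at `m ≠ 1` in the lcm-lattice: the complex whose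
facets are the supports `A_{m'}` of the elements `m'` covered by `m` (this is `{∅}`
when `m` is an atom, since then the only covered element is the bottom `1`). -/
def deltaM {n r : ℕ} (a : Fin r → (Fin n → ℕ)) (m : Fin n → ℕ) :
    Finset (Finset (Fin r)) :=
  Finset.univ.filter fun s => ∃ u, covIn a u m ∧ s ⊆ aSupp a u

/-- The rank of `m` in the lcm-lattice: the maximal length of chains from the bottom
element (exponent vector `0`, the monomial `1`) to `m`. -/
def rkOf {n r : ℕ} (a : Fin r → (Fin n → ℕ)) (m : Fin n → ℕ) : ℕ :=
  sSup {K : ℕ | ∃ c : Fin (K + 1) → (Fin n → ℕ),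
    StrictMono c ∧ (∀ j, c j ∈ latticeL a) ∧ c 0 = 0 ∧ c (Fin.last K) = m}

end

/-- `M` is homologically monotonic (degrees shifted by one so as to range over `ℕ`,
including the reduced degree `−1`). -/
def HomMonotonic (k : Type*) [Field k] {n r : ℕ} (a : Fin r → (Fin n → ℕ)) : Prop :=
  ∀ m ∈ latticeL a, ∀ m' ∈ latticeL a, (0 : Fin n → ℕ) < m' → m' < m →
    ∀ i j : ℕ, HtNonzero k (deltaM a m') i → HtNonzero k (deltaM a m) j → i < j

noncomputable section Aux

variable {k : Type*} [Field k] {n r : ℕ}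

/-- downward closed family of finsets -/
def DClosed {r : ℕ} (Δ : Finset (Finset (Fin r))) : Prop :=
  ∀ s ∈ Δ, ∀ t, t ⊆ s → t ∈ Δ

def pos {r : ℕ} (s : Finset (Fin r)) (v : Fin r) : ℕ := (s.filter fun w => w < v).card

lemma sdiff_erase_self' {s : Finset (Fin r)} {v : Fin r} (hv : v ∈ s) :
    s \ s.erase v = {v} := by
  ext x
  simp only [Finset.mem_sdiff, Finset.mem_erase, Finset.mem_singleton, not_and]
  constructor
  · rintro ⟨hx, h⟩
    by_contra hne
    exact (h hne) hx
  · rintro rfl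
    exact ⟨hv, fun h _ => absurd rfl h⟩

lemma coef_erase (k : Type*) [Field k] {s : Finset (Fin r)} {v : Fin r} (hv : v ∈ s) :
    bdryCoef k s (s.erase v) = (-1 : k) ^ pos s v := by
  rw [bdryCoef, if_pos (Finset.erase_subset _ _), sdiff_erase_self' hv, Finset.sum_singleton]
  rfl

lemma neg_pow_cancel (k : Type*) [Field k] {p q : ℕ} (h : Odd (p + q)) :
    (-1 : k) ^ p + (-1 : k) ^ q = 0 := by
  obtain ⟨c, hc⟩ := h
  rcases Nat.even_or_odd p with hp | hp
  · obtain ⟨d, hd⟩ := hp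
    have hq : Odd q := ⟨c - d, by omega⟩
    rw [Even.neg_one_pow ⟨d, hd⟩, Odd.neg_one_pow hq]
    ring
  · obtain ⟨d, hd⟩ := hp
    have hq : Even q := ⟨c - d, by omega⟩
    rw [Odd.neg_one_pow ⟨d, hd⟩, Even.neg_one_pow hq]
    ring

lemma pos_erase {s : Finset (Fin r)} {u w : Fin r} (hu : u ∈ s) :
    pos s w = pos (s.erase u) w + (if u < w then 1 else 0) := by
  unfold pos
  rw [Finset.filter_erase]
  by_cases huw : u < w
  · have hmem : u ∈ s.filter (fun x => x < w) := Finset.mem_filter.mpr ⟨hu, huw⟩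
    rw [Finset.card_erase_of_mem hmem, if_pos huw]
    have : 1 ≤ (s.filter (fun x => x < w)).card := Finset.card_pos.mpr ⟨u, hmem⟩
    omega
  · rw [Finset.erase_eq_of_notMem (a := u) (s := s.filter (fun x => x < w))
      (fun hmem => huw (Finset.mem_filter.mp hmem).2), if_neg huw, add_zero]

lemma parity4 {s : Finset (Fin r)} {v b : Fin r} (hv : v ∈ s) (hb : b ∈ s) (hvb : v ≠ b) :
    Odd (pos s v + pos (s.erase v) b + (pos s b + pos (s.erase b) v)) := by
  have h1 : pos s v = pos (s.erase b) v + (if b < v then 1 else 0) := pos_erase hb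
  have h2 : pos s b = pos (s.erase v) b + (if v < b then 1 else 0) := pos_erase hv
  have h3 : (if b < v then 1 else 0) + (if v < b then 1 else 0) = 1 := by
    rcases lt_or_gt_of_ne hvb with h | h
    · rw [if_neg (asymm h), if_pos h]
    · rw [if_pos h, if_neg (asymm h)]
  exact ⟨pos (s.erase v) b + pos (s.erase b) v, by omega⟩

/-- cancellation used for ∂∂ = 0 -/
lemma coef_cancel₁ (k : Type*) [Field k] {s : Finset (Fin r)} {v b : Fin r}
    (hv : v ∈ s) (hb : b ∈ s) (hvb : v ≠ b) :
    bdryCoef k s (s.erase v) * bdryCoef k (s.erase v) ((s.erase v).erase b)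
      + bdryCoef k s (s.erase b) * bdryCoef k (s.erase b) ((s.erase b).erase v) = 0 := by
  have hbv : b ∈ s.erase v := Finset.mem_erase.mpr ⟨hvb.symm, hb⟩
  have hvb' : v ∈ s.erase b := Finset.mem_erase.mpr ⟨hvb, hv⟩
  rw [coef_erase k hv, coef_erase k hb, coef_erase k hbv, coef_erase k hvb',
    ← pow_add, ← pow_add]
  exact neg_pow_cancel k (parity4 hv hb hvb)

/-- cancellation used for the cone homotopy -/
lemma coef_cancel₂ (k : Type*) [Field k] {s : Finset (Fin r)} {v b : Fin r}
    (hv : v ∈ s) (hb : b ∈ s) (hvb : v ≠ b) :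
    bdryCoef k s (s.erase v) * bdryCoef k s (s.erase b)
      + bdryCoef k (s.erase v) ((s.erase v).erase b)
        * bdryCoef k (s.erase b) ((s.erase b).erase v) = 0 := by
  have hbv : b ∈ s.erase v := Finset.mem_erase.mpr ⟨hvb.symm, hb⟩
  have hvb' : v ∈ s.erase b := Finset.mem_erase.mpr ⟨hvb, hv⟩
  rw [coef_erase k hv, coef_erase k hb, coef_erase k hbv, coef_erase k hvb',
    ← pow_add, ← pow_add]
  obtain ⟨c, hc⟩ := parity4 hv hb hvb
  exact neg_pow_cancel k ⟨c, by omega⟩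

lemma coef_sq (k : Type*) [Field k] {s t : Finset (Fin r)} (h : t ⊆ s) :
    bdryCoef k s t * bdryCoef k s t = 1 := by
  rw [bdryCoef, if_pos h, ← pow_add]
  exact Even.neg_one_pow ⟨_, rfl⟩

lemma coef_eq_zero_of_not_subset (k : Type*) [Field k] {s t : Finset (Fin r)}
    (h : ¬ t ⊆ s) : bdryCoef k s t = 0 := if_neg h


/-- extend a chain on the faces of `Δ` to a function on all finsets, by zero -/
def exChain {Δ : Finset (Finset (Fin r))} {c : ℕ} (z : Face Δ c → k) :
    Finset (Fin r) → k :=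
  fun s => if h : s ∈ Δ ∧ s.card = c then z ⟨s, h⟩ else 0

lemma exChain_face {Δ : Finset (Finset (Fin r))} {c : ℕ} (z : Face Δ c → k)
    (s : Face Δ c) : exChain z s.1 = z s := by
  rw [exChain, dif_pos s.2]

lemma exChain_eq_zero {Δ : Finset (Finset (Fin r))} {c : ℕ} (z : Face Δ c → k)
    {s : Finset (Fin r)} (h : ¬ (s ∈ Δ ∧ s.card = c)) : exChain z s = 0 := dif_neg h

lemma bdry_apply {Δ : Finset (Finset (Fin r))} {c : ℕ} (z : Face Δ (c + 1) → k)
    (t : Face Δ c) :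
    bdry k Δ c z t
      = ∑ s ∈ Δ.filter (fun s => s.card = c + 1), bdryCoef k s t.1 * exChain z s := by
  rw [bdry]
  rw [LinearMap.pi_apply, LinearMap.sum_apply]
  simp only [LinearMap.smul_apply, LinearMap.proj_apply, smul_eq_mul]
  rw [Finset.sum_subtype (p := fun s => s ∈ Δ ∧ s.card = c + 1)
    (Δ.filter (fun s => s.card = c + 1)) (fun x => by simp [Finset.mem_filter])
    (fun s => bdryCoef k s t.1 * exChain z s)]
  exact Finset.sum_congr rfl fun s _ => by rw [exChain_face]

lemma face_eq_erase {t s : Finset (Fin r)} {c : ℕ} (hts : t ⊆ s) (hs : s.card = c + 1)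
    (ht : t.card = c) : ∃ v ∈ s, v ∉ t ∧ t = s.erase v := by
  have hcard : (s \ t).card = 1 := by
    rw [Finset.card_sdiff_of_subset hts, hs, ht]
    omega
  obtain ⟨v, hv⟩ := Finset.card_eq_one.mp hcard
  have hvs : v ∈ s \ t := hv ▸ Finset.mem_singleton_self v
  refine ⟨v, (Finset.mem_sdiff.mp hvs).1, (Finset.mem_sdiff.mp hvs).2, ?_⟩
  apply Finset.eq_of_subset_of_card_le
  · intro x hx
    exact Finset.mem_erase.mpr ⟨fun hxv => (Finset.mem_sdiff.mp hvs).2 (hxv ▸ hx), hts hx⟩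
  · rw [Finset.card_erase_of_mem (Finset.mem_sdiff.mp hvs).1, hs, ht]
    omega

/-- the composition of two boundary maps vanishes -/
lemma bdry_bdry {Δ : Finset (Finset (Fin r))} (hΔ : DClosed Δ) (c : ℕ)
    (z : Face Δ (c + 2) → k) : bdry k Δ c (bdry k Δ (c + 1) z) = 0 := by
  funext t
  rw [bdry_apply]
  have hterm : ∀ s₁ ∈ Δ.filter (fun s => s.card = c + 1),
      bdryCoef k s₁ t.1 * exChain (bdry k Δ (c + 1) z) s₁
        = ∑ s₂ ∈ Δ.filter (fun s => s.card = c + 2),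
            bdryCoef k s₁ t.1 * (bdryCoef k s₂ s₁ * exChain z s₂) := by
    intro s₁ hs₁
    have h1 : s₁ ∈ Δ ∧ s₁.card = c + 1 := by
      simpa [Finset.mem_filter] using hs₁
    rw [exChain, dif_pos h1, bdry_apply, Finset.mul_sum]
  rw [Finset.sum_congr rfl hterm, Finset.sum_comm]
  rw [show (0 : Face Δ c → k) t = 0 from rfl]
  apply Finset.sum_eq_zero
  intro s₂ hs₂
  have h2 : s₂ ∈ Δ ∧ s₂.card = c + 2 := by simpa [Finset.mem_filter] using hs₂
  rw [Finset.sum_congr rfl (g := fun s₁ =>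
        (bdryCoef k s₂ s₁ * bdryCoef k s₁ t.1) * exChain z s₂) (fun s₁ _ => by ring),
    ← Finset.sum_mul]
  suffices h : ∑ s₁ ∈ Δ.filter (fun s => s.card = c + 1),
      bdryCoef k s₂ s₁ * bdryCoef k s₁ t.1 = 0 by rw [h, zero_mul]
  by_cases hts₂ : t.1 ⊆ s₂
  · -- s₂ \ t has two elements
    have hcard2 : (s₂ \ t.1).card = 2 := by
      rw [Finset.card_sdiff_of_subset hts₂, h2.2, t.2.2]
      omega
    obtain ⟨v, w, hvw, hvwset⟩ := Finset.card_eq_two.mp hcard2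
    have hvmem : v ∈ s₂ \ t.1 := by rw [hvwset]; simp
    have hwmem : w ∈ s₂ \ t.1 := by rw [hvwset]; simp
    have hvs₂ : v ∈ s₂ := (Finset.mem_sdiff.mp hvmem).1
    have hws₂ : w ∈ s₂ := (Finset.mem_sdiff.mp hwmem).1
    have hvt : v ∉ t.1 := (Finset.mem_sdiff.mp hvmem).2
    have hwt : w ∉ t.1 := (Finset.mem_sdiff.mp hwmem).2
    have htEv : t.1 = (s₂.erase v).erase w := by
      ext x
      simp only [Finset.mem_erase]
      constructor
      · intro hx
        refine ⟨fun h => hwt (h ▸ hx), fun h => hvt (h ▸ hx), hts₂ hx⟩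
      · rintro ⟨hxw, hxv, hxs⟩
        by_contra hxt
        have : x ∈ s₂ \ t.1 := Finset.mem_sdiff.mpr ⟨hxs, hxt⟩
        rw [hvwset] at this
        simp only [Finset.mem_insert, Finset.mem_singleton] at this
        tauto
    have htEw : t.1 = (s₂.erase w).erase v := by
      rw [htEv, Finset.erase_right_comm]
    have hever : s₂.erase v ∈ Δ.filter (fun s => s.card = c + 1) := by
      rw [Finset.mem_filter]
      exact ⟨hΔ s₂ h2.1 _ (Finset.erase_subset _ _),
        by rw [Finset.card_erase_of_mem hvs₂, h2.2]; omega⟩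
    have hewer : s₂.erase w ∈ Δ.filter (fun s => s.card = c + 1) := by
      rw [Finset.mem_filter]
      exact ⟨hΔ s₂ h2.1 _ (Finset.erase_subset _ _),
        by rw [Finset.card_erase_of_mem hws₂, h2.2]; omega⟩
    have hne : s₂.erase v ≠ s₂.erase w := by
      intro h
      have : v ∈ s₂.erase v := by
        rw [h]
        exact Finset.mem_erase.mpr ⟨hvw, hvs₂⟩
      exact (Finset.mem_erase.mp this).1 rfl
    have hsub : ({s₂.erase v, s₂.erase w} : Finset (Finset (Fin r)))
        ⊆ Δ.filter (fun s => s.card = c + 1) := by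
      intro x hx
      rcases Finset.mem_insert.mp hx with rfl | hx
      · exact hever
      · rw [Finset.mem_singleton.mp hx]
        exact hewer
    rw [← Finset.sum_subset hsub ?van, Finset.sum_pair hne]
    case van =>
      intro s₁ hs₁ hs₁pair
      have h1 : s₁ ∈ Δ ∧ s₁.card = c + 1 := by simpa [Finset.mem_filter] using hs₁
      by_cases hsub1 : s₁ ⊆ s₂
      · by_cases hsub2 : t.1 ⊆ s₁
        · exfalso
          obtain ⟨u, hus, hut, hs₁e⟩ := face_eq_erase hsub1 h2.2 h1.2
          have humem : u ∈ s₂ \ t.1 := Finset.mem_sdiff.mpr ⟨hus, fun h => hut (hsub2 h)⟩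
          rw [hvwset] at humem
          simp only [Finset.mem_insert, Finset.mem_singleton] at humem
          rcases humem with rfl | rfl
          · exact hs₁pair (Finset.mem_insert.mpr (Or.inl hs₁e))
          · exact hs₁pair (Finset.mem_insert.mpr (Or.inr (Finset.mem_singleton.mpr hs₁e)))
        · rw [coef_eq_zero_of_not_subset k hsub2, mul_zero]
      · rw [coef_eq_zero_of_not_subset k hsub1, zero_mul]
    rw [htEv]
    nth_rewrite 2 [Finset.erase_right_comm]
    exact coef_cancel₁ k hvs₂ hws₂ hvw
  · apply Finset.sum_eq_zero
    intro s₁ hs₁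
    by_cases hsub2 : t.1 ⊆ s₁
    · have h1 : s₁ ∈ Δ ∧ s₁.card = c + 1 := by simpa [Finset.mem_filter] using hs₁
      by_cases hsub1 : s₁ ⊆ s₂
      · exact absurd (hsub2.trans hsub1) hts₂
      · rw [coef_eq_zero_of_not_subset k hsub1, zero_mul]
    · rw [coef_eq_zero_of_not_subset k hsub2, mul_zero]


/-- extension by zero of a chain on a subcomplex -/
def extC {X E : Finset (Finset (Fin r))} (hXE : X ⊆ E) {c : ℕ} (z : Face X c → k) :
    Face E c → k :=
  fun s => if h : s.1 ∈ X then z ⟨s.1, h, s.2.2⟩ else 0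

/-- restriction of a chain to a subcomplex -/
def resC {X E : Finset (Finset (Fin r))} (hXE : X ⊆ E) {c : ℕ} (w : Face E c → k) :
    Face X c → k :=
  fun s => w ⟨s.1, hXE s.2.1, s.2.2⟩

/-- a chain supported on a subfamily -/
def SuppIn {E : Finset (Finset (Fin r))} {c : ℕ} (w : Face E c → k)
    (X : Finset (Finset (Fin r))) : Prop :=
  ∀ s : Face E c, w s ≠ 0 → s.1 ∈ X

lemma exChain_extC {X E : Finset (Finset (Fin r))} (hXE : X ⊆ E) {c : ℕ}
    (z : Face X c → k) : exChain (extC hXE z) = exChain z := by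
  funext s
  by_cases hX : s ∈ X ∧ s.card = c
  · rw [exChain, exChain, dif_pos ⟨hXE hX.1, hX.2⟩, dif_pos hX, extC, dif_pos hX.1]
  · rw [exChain, exChain, dif_neg hX]
    by_cases hE : s ∈ E ∧ s.card = c
    · rw [dif_pos hE, extC, dif_neg (fun hsX => hX ⟨hsX, hE.2⟩)]
    · rw [dif_neg hE]

lemma extC_res {X E : Finset (Finset (Fin r))} (hXE : X ⊆ E) {c : ℕ}
    (w : Face E c → k) (hsupp : SuppIn w X) : extC hXE (resC hXE w) = w := by
  funext s
  rw [extC]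
  by_cases hX : s.1 ∈ X
  · rw [dif_pos hX]; rfl
  · rw [dif_neg hX]
    by_contra hne
    exact hX (hsupp s fun h => hne h.symm)

lemma extC_extC {X G E : Finset (Finset (Fin r))} (hXG : X ⊆ G) (hGE : G ⊆ E) {c : ℕ}
    (v : Face X c → k) : extC hGE (extC hXG v) = extC (hXG.trans hGE) v := by
  funext s
  by_cases hG : s.1 ∈ G
  · by_cases hX : s.1 ∈ X <;> simp [extC, hG, hX]
  · have hX : s.1 ∉ X := fun h => hG (hXG h)
    simp [extC, hG, hX]

lemma filter_subset_filter_card {X E : Finset (Finset (Fin r))} (hXE : X ⊆ E) (c : ℕ) :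
    X.filter (fun s => s.card = c) ⊆ E.filter (fun s => s.card = c) := by
  intro s hs
  rw [Finset.mem_filter] at hs ⊢
  exact ⟨hXE hs.1, hs.2⟩

/-- the boundary map commutes with extension by zero, for a downward closed subcomplex -/
lemma bdry_extC {X E : Finset (Finset (Fin r))} (hXE : X ⊆ E) (hXdc : DClosed X)
    {c : ℕ} (z : Face X (c + 1) → k) :
    bdry k E c (extC hXE z) = extC hXE (bdry k X c z) := by
  funext t
  rw [bdry_apply, exChain_extC]
  rw [extC]
  by_cases htX : t.1 ∈ X
  · rw [dif_pos htX, bdry_apply]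
    refine (Finset.sum_subset (filter_subset_filter_card hXE (c+1)) ?_).symm
    intro s hs hsX
    rw [Finset.mem_filter] at hs hsX
    rw [exChain_eq_zero z hsX, mul_zero]
  · rw [dif_neg htX]
    apply Finset.sum_eq_zero
    intro s hs
    rw [Finset.mem_filter] at hs
    by_cases hts : t.1 ⊆ s
    · by_cases hsX : s ∈ X ∧ s.card = c + 1
      · exact absurd (hXdc s hsX.1 t.1 hts) htX
      · rw [exChain_eq_zero z hsX, mul_zero]
    · rw [coef_eq_zero_of_not_subset k hts, zero_mul]

/-- the boundary of a supported chain computes within the subcomplex -/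
lemma bdry_resC {X E : Finset (Finset (Fin r))} (hXE : X ⊆ E) {c : ℕ}
    (w : Face E (c + 1) → k) (hsupp : SuppIn w X) (t : Face X c) :
    bdry k X c (resC hXE w) t = bdry k E c w ⟨t.1, hXE t.2.1, t.2.2⟩ := by
  rw [bdry_apply, bdry_apply]
  have h1 : ∀ s ∈ X.filter (fun s => s.card = c + 1),
      bdryCoef k s t.1 * exChain (resC hXE w) s = bdryCoef k s t.1 * exChain w s := by
    intro s hs
    rw [Finset.mem_filter] at hs
    have e1 : exChain (resC hXE w) s = w ⟨s, hXE hs.1, hs.2⟩ := by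
      rw [exChain, dif_pos (⟨hs.1, hs.2⟩ : s ∈ X ∧ s.card = c + 1)]
      rfl
    have e2 : exChain w s = w ⟨s, hXE hs.1, hs.2⟩ := by
      rw [exChain, dif_pos (⟨hXE hs.1, hs.2⟩ : s ∈ E ∧ s.card = c + 1)]
    rw [e1, e2]
  rw [Finset.sum_congr rfl h1]
  refine Finset.sum_subset (filter_subset_filter_card hXE (c+1)) ?_
  intro s hs hsX
  rw [Finset.mem_filter] at hs hsX
  have hz : exChain w s = 0 := by
    rw [exChain, dif_pos ⟨hs.1, hs.2⟩]
    by_contra hne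
    exact hsX ⟨hsupp _ hne, hs.2⟩
  rw [hz, mul_zero]


lemma dclosed_union {D G : Finset (Finset (Fin r))} (hD : DClosed D) (hG : DClosed G) :
    DClosed (D ∪ G) := by
  intro s hs t ht
  rcases Finset.mem_union.mp hs with h | h
  · exact Finset.mem_union.mpr (Or.inl (hD s h t ht))
  · exact Finset.mem_union.mpr (Or.inr (hG s h t ht))

lemma dclosed_inter {D G : Finset (Finset (Fin r))} (hD : DClosed D) (hG : DClosed G) :
    DClosed (D ∩ G) := by
  intro s hs t ht
  rw [Finset.mem_inter] at hs ⊢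
  exact ⟨hD s hs.1 t ht, hG s hs.2 t ht⟩

/-- Mayer–Vietoris style gluing of vanishing of homology. -/
lemma mv_vanish {D G : Finset (Finset (Fin r))} (hD : DClosed D) (hG : DClosed G) (c : ℕ)
    (hA : ∀ z : Face D (c + 2) → k, bdry k D (c + 1) z = 0 →
      ∃ y, bdry k D (c + 2) y = z)
    (hB : ∀ z : Face G (c + 2) → k, bdry k G (c + 1) z = 0 →
      ∃ y, bdry k G (c + 2) y = z)
    (hC : ∀ w : Face (D ∩ G) (c + 1) → k, bdry k (D ∩ G) c w = 0 →
      ∃ v, bdry k (D ∩ G) (c + 1) v = w)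
    (z : Face (D ∪ G) (c + 2) → k) (hz : bdry k (D ∪ G) (c + 1) z = 0) :
    ∃ y, bdry k (D ∪ G) (c + 2) y = z := by
  have hDE : D ⊆ D ∪ G := Finset.subset_union_left
  have hGE : G ⊆ D ∪ G := Finset.subset_union_right
  have hIG : D ∩ G ⊆ G := Finset.inter_subset_right
  have hEdc : DClosed (D ∪ G) := dclosed_union hD hG
  have hIdc : DClosed (D ∩ G) := dclosed_inter hD hG
  set zG : Face G (c + 2) → k :=
    fun s => if s.1 ∈ D then 0 else z ⟨s.1, hGE s.2.1, s.2.2⟩ with hzGdef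
  -- the boundary of zG is supported on the intersection
  have step1 : ∀ t : Face G (c + 1), t.1 ∉ D → bdry k G (c + 1) zG t = 0 := by
    intro t htD
    have h0 := congrFun hz ⟨t.1, hGE t.2.1, t.2.2⟩
    rw [Pi.zero_apply] at h0
    rw [bdry_apply] at h0 ⊢
    have e1 : ∀ s ∈ (D ∪ G).filter (fun s => s.card = c + 2),
        bdryCoef k s t.1 * exChain z s = bdryCoef k s t.1 * exChain zG s := by
      intro s hs
      rw [Finset.mem_filter] at hs
      by_cases hsD : s ∈ D
      · by_cases hts : t.1 ⊆ s
        · exact absurd (hD s hsD t.1 hts) htD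
        · rw [coef_eq_zero_of_not_subset k hts, zero_mul, zero_mul]
      · have hsG : s ∈ G := (Finset.mem_union.mp hs.1).resolve_left hsD
        have e2 : exChain zG s = exChain z s := by
          rw [exChain, dif_pos (⟨hsG, hs.2⟩ : s ∈ G ∧ s.card = c + 2),
            exChain, dif_pos (⟨hs.1, hs.2⟩ : s ∈ D ∪ G ∧ s.card = c + 2)]
          show (if s ∈ D then 0 else z ⟨s, hGE hsG, hs.2⟩) = z ⟨s, hs.1, hs.2⟩
          rw [if_neg hsD]
        rw [e2]
    rw [Finset.sum_congr rfl e1] at h0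
    rw [← Finset.sum_subset (filter_subset_filter_card hGE (c + 2)) ?van] at h0
    · exact h0
    case van =>
      intro s hs hsG
      rw [Finset.mem_filter] at hs hsG
      rw [exChain_eq_zero zG hsG, mul_zero]
  have hsupp : SuppIn (bdry k G (c + 1) zG) (D ∩ G) := by
    intro t hne
    by_contra htI
    have htD : t.1 ∉ D := fun hd => htI (Finset.mem_inter.mpr ⟨hd, t.2.1⟩)
    exact hne (step1 t htD)
  have hw'cyc : bdry k G c (bdry k G (c + 1) zG) = 0 := bdry_bdry hG c zG
  have hwcyc : bdry k (D ∩ G) c (resC hIG (bdry k G (c + 1) zG)) = 0 := by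
    funext t
    rw [Pi.zero_apply, bdry_resC hIG _ hsupp t]
    have := congrFun hw'cyc ⟨t.1, hIG t.2.1, t.2.2⟩
    rwa [Pi.zero_apply] at this
  obtain ⟨v, hv⟩ := hC _ hwcyc
  have hzG2cyc : bdry k G (c + 1) (zG - extC hIG v) = 0 := by
    rw [map_sub, bdry_extC hIG hIdc v, hv, extC_res hIG _ hsupp, sub_self]
  obtain ⟨g, hg⟩ := hB _ hzG2cyc
  set z2 : Face (D ∪ G) (c + 2) → k :=
    z - bdry k (D ∪ G) (c + 2) (extC hGE g) with hz2def
  have hz2cyc : bdry k (D ∪ G) (c + 1) z2 = 0 := by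
    rw [hz2def, map_sub, hz, bdry_bdry hEdc (c + 1) (extC hGE g), sub_zero]
  have hz2eq : z2 = z - extC hGE (zG - extC hIG v) := by
    rw [hz2def, bdry_extC hGE hG g, hg]
  have hz2supp : SuppIn z2 D := by
    intro s hne
    by_contra hsD
    apply hne
    have hsG : s.1 ∈ G := (Finset.mem_union.mp s.2.1).resolve_left hsD
    rw [hz2eq]
    show z s - extC hGE (zG - extC hIG v) s = 0
    rw [extC, dif_pos hsG]
    show z s - (zG ⟨s.1, hsG, s.2.2⟩ - extC hIG v ⟨s.1, hsG, s.2.2⟩) = 0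
    rw [extC, dif_neg (fun hI => hsD (Finset.mem_inter.mp hI).1)]
    show z s - ((if s.1 ∈ D then 0 else z ⟨s.1, hGE hsG, s.2.2⟩) - 0) = 0
    rw [if_neg hsD, sub_zero, sub_self]
  have hzDcyc : bdry k D (c + 1) (resC hDE z2) = 0 := by
    funext t
    rw [Pi.zero_apply, bdry_resC hDE z2 hz2supp t]
    have := congrFun hz2cyc ⟨t.1, hDE t.2.1, t.2.2⟩
    rwa [Pi.zero_apply] at this
  obtain ⟨h, hh⟩ := hA _ hzDcyc
  refine ⟨extC hGE g + extC hDE h, ?_⟩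
  rw [map_add, bdry_extC hDE hD h, hh, extC_res hDE z2 hz2supp]
  rw [hz2def]
  abel


lemma sum_insert_reindex {B t : Finset (Fin r)} (ht : t ⊆ B) (F : Finset (Fin r) → k)
    (hF : ∀ s, s ⊆ B → s.card = t.card + 1 → ¬ t ⊆ s → F s = 0) :
    ∑ s ∈ B.powerset.filter (fun s => s.card = t.card + 1), F s
      = ∑ v ∈ B \ t, F (insert v t) := by
  rw [← Finset.sum_image (g := fun v => insert v t) (f := F) ?inj]
  case inj =>
    intro x hx y hy hxy
    rw [Finset.mem_coe, Finset.mem_sdiff] at hx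
    have hxy' : insert x t = insert y t := hxy
    have : x ∈ insert y t := hxy' ▸ Finset.mem_insert_self x t
    exact (Finset.mem_insert.mp this).resolve_right (fun h => hx.2 h)
  refine (Finset.sum_subset ?sub ?van).symm
  case sub =>
    intro s hs
    obtain ⟨v, hv, rfl⟩ := Finset.mem_image.mp hs
    rw [Finset.mem_sdiff] at hv
    rw [Finset.mem_filter, Finset.mem_powerset]
    exact ⟨Finset.insert_subset hv.1 ht, by rw [Finset.card_insert_of_notMem hv.2]⟩
  case van =>
    intro s hs hsim
    rw [Finset.mem_filter, Finset.mem_powerset] at hs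
    by_cases hts : t ⊆ s
    · exfalso
      obtain ⟨v, hvs, hvt, hte⟩ := face_eq_erase hts hs.2 rfl
      apply hsim
      rw [Finset.mem_image]
      refine ⟨v, Finset.mem_sdiff.mpr ⟨hs.1 hvs, hvt⟩, ?_⟩
      rw [hte, Finset.insert_erase hvs]
    · exact hF s hs.1 hs.2 hts

lemma sum_insert_reindex' {B t : Finset (Fin r)} (ht : t ⊆ B) (d : ℕ)
    (hd : d = t.card + 1) (F : Finset (Fin r) → k)
    (hF : ∀ s, s ⊆ B → s.card = d → ¬ t ⊆ s → F s = 0) :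
    ∑ s ∈ B.powerset.filter (fun s => s.card = d), F s
      = ∑ v ∈ B \ t, F (insert v t) := by
  subst hd
  exact sum_insert_reindex ht F hF

/-- the full simplex on a nonempty vertex set is acyclic in every level. -/
lemma simplex_acyclic {B : Finset (Fin r)} {b : Fin r} (hb : b ∈ B) (ℓ : ℕ)
    (z : Face B.powerset (ℓ + 1) → k) (hz : bdry k B.powerset ℓ z = 0) :
    ∃ y, bdry k B.powerset (ℓ + 1) y = z := by
  set Y : Finset (Fin r) → k :=
    fun s => if b ∈ s then bdryCoef k s (s.erase b) * exChain z (s.erase b) else 0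
    with hYdef
  refine ⟨fun s => Y s.1, ?_⟩
  funext t
  rw [bdry_apply]
  have htB : t.1 ⊆ B := Finset.mem_powerset.mp t.2.1
  have htc : t.1.card = ℓ + 1 := t.2.2
  have hexY : ∀ s ∈ B.powerset.filter (fun s => s.card = ℓ + 2),
      bdryCoef k s t.1 * exChain (fun s : Face B.powerset (ℓ + 2) => Y s.1) s
        = bdryCoef k s t.1 * Y s := by
    intro s hs
    rw [Finset.mem_filter] at hs
    rw [exChain, dif_pos (⟨hs.1, hs.2⟩ : s ∈ B.powerset ∧ s.card = ℓ + 2)]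
  rw [Finset.sum_congr rfl hexY]
  by_cases hbt : b ∈ t.1
  · -- reindex the sum over codimension-one cofaces of t
    rw [sum_insert_reindex' htB (ℓ + 2) (by rw [htc])
      (fun s => bdryCoef k s t.1 * Y s) (fun s _ _ hts => by
        show bdryCoef k s t.1 * Y s = 0
        rw [coef_eq_zero_of_not_subset k hts, zero_mul])]
    -- use the cycle condition at t.erase b
    have htteB : t.1.erase b ∈ B.powerset := Finset.mem_powerset.mpr
      ((Finset.erase_subset _ _).trans htB)
    have htec : (t.1.erase b).card = ℓ := by
      rw [Finset.card_erase_of_mem hbt, htc]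
      omega
    have h0' := congrFun hz ⟨t.1.erase b, htteB, htec⟩
    rw [Pi.zero_apply, bdry_apply] at h0'
    have h0 : ∑ σ ∈ B.powerset.filter (fun s => s.card = ℓ + 1),
        bdryCoef k σ (t.1.erase b) * exChain z σ = 0 := h0'
    rw [sum_insert_reindex' ((Finset.erase_subset _ _).trans htB) (ℓ + 1)
      (by rw [htec]) (fun σ => bdryCoef k σ (t.1.erase b) * exChain z σ)
      (fun s _ _ hts => by
        show bdryCoef k s (t.1.erase b) * exChain z s = 0
        rw [coef_eq_zero_of_not_subset k hts, zero_mul])] at h0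
    have hBsplit : B \ (t.1.erase b) = insert b (B \ t.1) := by
      ext x
      simp only [Finset.mem_sdiff, Finset.mem_erase, Finset.mem_insert, not_and]
      constructor
      · rintro ⟨hxB, hx⟩
        by_cases hxb : x = b
        · exact Or.inl hxb
        · exact Or.inr ⟨hxB, fun hxt => (hx (fun h => absurd h hxb)) hxt⟩
      · rintro (rfl | ⟨hxB, hxt⟩)
        · exact ⟨hb, fun h _ => absurd rfl h⟩
        · exact ⟨hxB, fun _ h => hxt h⟩
    rw [hBsplit, Finset.sum_insert (fun h => (Finset.mem_sdiff.mp h).2 hbt),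
      Finset.insert_erase hbt, exChain_face z t] at h0
    -- h0 : coef t (t.erase b) * z t + ∑ v ∈ B \ t, ... = 0
    have key : ∀ v ∈ B \ t.1,
        bdryCoef k (insert v t.1) t.1 * Y (insert v t.1)
          = - (bdryCoef k t.1 (t.1.erase b)
              * (bdryCoef k (insert v (t.1.erase b)) (t.1.erase b)
                * exChain z (insert v (t.1.erase b)))) := by
      intro v hv
      rw [Finset.mem_sdiff] at hv
      have hvt : v ∉ t.1 := hv.2
      have hvb : v ≠ b := fun h => hvt (h ▸ hbt)
      have hsv : (insert v t.1).erase v = t.1 := Finset.erase_insert hvt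
      have hsb : (insert v t.1).erase b = insert v (t.1.erase b) :=
        Finset.erase_insert_of_ne hvb
      have hvs : v ∈ insert v t.1 := Finset.mem_insert_self v t.1
      have hbs : b ∈ insert v t.1 := Finset.mem_insert_of_mem hbt
      have hY : Y (insert v t.1) = bdryCoef k (insert v t.1) ((insert v t.1).erase b)
          * exChain z ((insert v t.1).erase b) := if_pos hbs
      have hc := coef_cancel₂ k hvs hbs hvb
      rw [hsv, hsb] at hc
      have hsvb : (t.1).erase b = t.1.erase b := rfl
      have hsbv : (insert v (t.1.erase b)).erase v = t.1.erase b :=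
        Finset.erase_insert (fun h => hvt (Finset.erase_subset _ _ h))
      rw [hsbv] at hc
      -- hc : coef s t * coef s (insert v (t.erase b))
      --      + coef t (t.erase b) * coef (insert v (t.erase b)) (t.erase b) = 0
      rw [hY, hsb]
      have hprod : bdryCoef k (insert v t.1) t.1
            * bdryCoef k (insert v t.1) (insert v (t.1.erase b))
          = - (bdryCoef k t.1 (t.1.erase b)
            * bdryCoef k (insert v (t.1.erase b)) (t.1.erase b)) := by
        linear_combination hc
      calc bdryCoef k (insert v t.1) t.1
            * (bdryCoef k (insert v t.1) (insert v (t.1.erase b))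
              * exChain z (insert v (t.1.erase b)))
          = (bdryCoef k (insert v t.1) t.1
              * bdryCoef k (insert v t.1) (insert v (t.1.erase b)))
              * exChain z (insert v (t.1.erase b)) := by ring
        _ = _ := by rw [hprod]; ring
    rw [Finset.sum_congr rfl key]
    have hS : ∑ v ∈ B \ t.1, (bdryCoef k (insert v (t.1.erase b)) (t.1.erase b)
          * exChain z (insert v (t.1.erase b)))
        = - (bdryCoef k t.1 (t.1.erase b) * z t) := by linear_combination h0
    have hsq := coef_sq k (s := t.1) (t := t.1.erase b) (Finset.erase_subset _ _)
    calc ∑ v ∈ B \ t.1, - (bdryCoef k t.1 (t.1.erase b)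
            * (bdryCoef k (insert v (t.1.erase b)) (t.1.erase b)
              * exChain z (insert v (t.1.erase b))))
        = - (bdryCoef k t.1 (t.1.erase b) * ∑ v ∈ B \ t.1,
            (bdryCoef k (insert v (t.1.erase b)) (t.1.erase b)
              * exChain z (insert v (t.1.erase b)))) := by
          rw [Finset.mul_sum, ← Finset.sum_neg_distrib]
      _ = bdryCoef k t.1 (t.1.erase b) * bdryCoef k t.1 (t.1.erase b) * z t := by
          rw [hS]; ring
      _ = z t := by rw [hsq, one_mul]
  · -- single contributing coface: insert b t
    have hins : insert b t.1 ∈ B.powerset.filter (fun s => s.card = ℓ + 2) := by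
      rw [Finset.mem_filter, Finset.mem_powerset]
      exact ⟨Finset.insert_subset hb htB, by rw [Finset.card_insert_of_notMem hbt, htc]⟩
    rw [Finset.sum_eq_single_of_mem _ hins ?van]
    case van =>
      intro s hs hne
      rw [Finset.mem_filter, Finset.mem_powerset] at hs
      by_cases hts : t.1 ⊆ s
      · by_cases hbs : b ∈ s
        · exfalso
          apply hne
          apply (Finset.eq_of_subset_of_card_le (Finset.insert_subset hbs hts) ?_).symm
          rw [hs.2, Finset.card_insert_of_notMem hbt, htc]
        · rw [hYdef]
          show bdryCoef k s t.1 * (if b ∈ s then _ else 0) = 0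
          rw [if_neg hbs, mul_zero]
      · rw [coef_eq_zero_of_not_subset k hts, zero_mul]
    have herase : (insert b t.1).erase b = t.1 := Finset.erase_insert hbt
    have hY : Y (insert b t.1)
        = bdryCoef k (insert b t.1) t.1 * exChain z t.1 := by
      rw [hYdef]
      show (if b ∈ insert b t.1 then bdryCoef k _ ((insert b t.1).erase b)
          * exChain z ((insert b t.1).erase b) else 0) = _
      rw [if_pos (Finset.mem_insert_self b t.1), herase]
    rw [hY, exChain_face, ← mul_assoc, coef_sq k (Finset.subset_insert b t.1), one_mul]


section Lattice

variable (a : Fin r → (Fin n → ℕ))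

lemma pi_zero_le (v : Fin n → ℕ) : (0 : Fin n → ℕ) ≤ v := fun _ => Nat.zero_le _

def latticeF : Finset (Fin n → ℕ) :=
  Finset.univ.image (fun A : Finset (Fin r) => A.sup a)

lemma mem_latticeF {v : Fin n → ℕ} : v ∈ latticeF a ↔ v ∈ latticeL a := by
  simp only [latticeF, Finset.mem_image, Finset.mem_univ, true_and, latticeL,
    Set.mem_setOf_eq]
  constructor
  · rintro ⟨A, hA⟩
    exact ⟨A, hA.symm⟩
  · rintro ⟨A, hA⟩
    exact ⟨A, hA.symm⟩

lemma bot_eq_zero_pi : (⊥ : Fin n → ℕ) = 0 := rfl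

lemma zero_mem_latticeL : (0 : Fin n → ℕ) ∈ latticeL a :=
  ⟨∅, by rw [Finset.sup_empty, bot_eq_zero_pi]⟩

lemma mem_aSupp {i : Fin r} {v : Fin n → ℕ} : i ∈ aSupp a v ↔ a i ≤ v := by
  simp [aSupp]

lemma exists_cov {m w : Fin n → ℕ} (hw : w ∈ latticeL a) (hwm : w < m) :
    ∃ u, covIn a u m ∧ w ≤ u := by
  have hne : ((latticeF a).filter (fun u => w ≤ u ∧ u < m)).Nonempty :=
    ⟨w, Finset.mem_filter.mpr ⟨(mem_latticeF a).mpr hw, le_refl w, hwm⟩⟩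
  obtain ⟨u, huT, hmax⟩ : ∃ u ∈ (latticeF a).filter (fun u => w ≤ u ∧ u < m),
      ∀ x ∈ (latticeF a).filter (fun u => w ≤ u ∧ u < m), ¬ u < x := by
    obtain ⟨u, hu⟩ := Finset.exists_maximal hne
    exact ⟨u, hu.1, fun x hx hlt => hlt.not_ge (hu.2 hx hlt.le)⟩
  rw [Finset.mem_filter] at huT
  refine ⟨u, ⟨(mem_latticeF a).mp huT.1, huT.2.2, ?_⟩, huT.2.1⟩
  rintro x hx ⟨h1, h2⟩
  exact hmax x (Finset.mem_filter.mpr ⟨(mem_latticeF a).mpr hx,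
    huT.2.1.trans h1.le, h2⟩) h1

lemma exists_atom_le {x : Fin n → ℕ} (hx : x ∈ latticeL a) (hx0 : x ≠ 0) :
    ∃ b, a b ≤ x := by
  obtain ⟨A, rfl⟩ := hx
  rcases A.eq_empty_or_nonempty with rfl | ⟨b, hb⟩
  · exact absurd (by rw [Finset.sup_empty, bot_eq_zero_pi]) hx0
  · exact ⟨b, Finset.le_sup hb⟩

/-- union of the simplices on the supports of the elements of `S` -/
def DS (S : Finset (Fin n → ℕ)) : Finset (Finset (Fin r)) :=
  Finset.univ.filter (fun s => ∃ x ∈ S, s ⊆ aSupp a x)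

lemma dclosed_DS (S : Finset (Fin n → ℕ)) : DClosed (DS a S) := by
  intro s hs t ht
  rw [DS, Finset.mem_filter] at hs ⊢
  obtain ⟨-, x, hx, hsub⟩ := hs
  exact ⟨Finset.mem_univ t, x, hx, ht.trans hsub⟩

lemma dclosed_powerset (B : Finset (Fin r)) : DClosed B.powerset := by
  intro s hs t ht
  rw [Finset.mem_powerset] at hs ⊢
  exact ht.trans hs

lemma dclosed_deltaM (m : Fin n → ℕ) : DClosed (deltaM a m) := by
  intro s hs t ht
  rw [deltaM, Finset.mem_filter] at hs ⊢
  obtain ⟨-, u, hu, hsub⟩ := hs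
  exact ⟨Finset.mem_univ t, u, hu, ht.trans hsub⟩

lemma deltaM_eq_DS (m : Fin n → ℕ) :
    deltaM a m = DS a ((latticeF a).filter (fun x => x < m)) := by
  ext s
  simp only [deltaM, DS, Finset.mem_filter, Finset.mem_univ, true_and]
  constructor
  · rintro ⟨u, hcov, hsub⟩
    exact ⟨u, ⟨(mem_latticeF a).mpr hcov.1, hcov.2.1⟩, hsub⟩
  · rintro ⟨x, ⟨hxF, hxm⟩, hsub⟩
    obtain ⟨u, hcov, hxu⟩ := exists_cov a ((mem_latticeF a).mp hxF) hxm
    exact ⟨u, hcov, hsub.trans (fun i hi =>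
      (mem_aSupp a).mpr (((mem_aSupp a).mp hi).trans hxu))⟩

end Lattice

/-- Key vanishing lemma: if all crosscut complexes strictly between `0` and `m`
have vanishing homology in all levels `≥ i ≥ 1`, then all the unions of support
simplices over downward closed families below `m` have vanishing homology in all
levels `≥ i + 1`. -/
lemma key_vanish (a : Fin r → (Fin n → ℕ)) (ha0 : aSupp a 0 = ∅) (m : Fin n → ℕ)
    (i : ℕ) (hi : 1 ≤ i)
    (Hyp : ∀ x, x ∈ latticeL a → 0 < x → x < m → ∀ c : ℕ, i ≤ c + 1 →
      ∀ w : Face (deltaM a x) (c + 1) → k, bdry k (deltaM a x) c w = 0 →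
        ∃ v, bdry k (deltaM a x) (c + 1) v = w) :
    ∀ S : Finset (Fin n → ℕ), (∀ x ∈ S, x ∈ latticeL a) → (∀ x ∈ S, x < m) →
      (∀ x ∈ S, ∀ y, y ∈ latticeL a → y ≤ x → y ∈ S) →
      ∀ c : ℕ, i ≤ c → ∀ z : Face (DS a S) (c + 1) → k,
        bdry k (DS a S) c z = 0 → ∃ y, bdry k (DS a S) (c + 1) y = z := by
  intro S
  induction S using Finset.strongInduction with
  | _ S ih =>
  intro hSL hSm hdc c hc
  rcases S.eq_empty_or_nonempty with rfl | hne
  · intro z hz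
    refine ⟨0, ?_⟩
    rw [map_zero]
    funext s
    exfalso
    have hmem := s.2.1
    simp only [DS, Finset.mem_filter, Finset.mem_univ, true_and,
      Finset.notMem_empty] at hmem
    obtain ⟨x, hx, -⟩ := hmem
    exact hx
  · obtain ⟨x, hxS, hxmax⟩ : ∃ x ∈ S, ∀ x' ∈ S, ¬ x < x' := by
      obtain ⟨x, hx⟩ := Finset.exists_maximal hne
      exact ⟨x, hx.1, fun x' hx' hlt => hlt.not_ge (hx.2 hx' hlt.le)⟩
    by_cases hx0 : x = 0
    · -- S consists of 0 only, so DS a S has no faces of positive cardinality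
      intro z hz
      refine ⟨0, ?_⟩
      rw [map_zero]
      funext s
      exfalso
      obtain ⟨hmem, hcard⟩ := s.2
      simp only [DS, Finset.mem_filter, Finset.mem_univ, true_and] at hmem
      obtain ⟨y, hyS, hsub⟩ := hmem
      have hy0 : y = 0 := by
        by_contra hy0
        exact hxmax y hyS (hx0 ▸ lt_of_le_of_ne (pi_zero_le y) (Ne.symm hy0))
      rw [hy0, ha0, Finset.subset_empty] at hsub
      rw [hsub, Finset.card_empty] at hcard
      exact Nat.succ_ne_zero c hcard.symm
    · -- main case : split off the maximal element x ≠ 0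
      have hx0' : (0 : Fin n → ℕ) < x := lt_of_le_of_ne (pi_zero_le x) (Ne.symm hx0)
      have hxL : x ∈ latticeL a := hSL x hxS
      obtain ⟨b, hbA⟩ := exists_atom_le a hxL hx0
      have hbsupp : b ∈ aSupp a x := (mem_aSupp a).mpr hbA
      set S' := S.erase x with hS'def
      have hS'L : ∀ y ∈ S', y ∈ latticeL a :=
        fun y hy => hSL y (Finset.mem_of_mem_erase hy)
      have hS'm : ∀ y ∈ S', y < m := fun y hy => hSm y (Finset.mem_of_mem_erase hy)
      have hS'dc : ∀ x'' ∈ S', ∀ y, y ∈ latticeL a → y ≤ x'' → y ∈ S' := by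
        intro x'' hx'' y hyL hyx
        have hx''S := Finset.mem_of_mem_erase hx''
        have hyS : y ∈ S := hdc x'' hx''S y hyL hyx
        refine Finset.mem_erase.mpr ⟨?_, hyS⟩
        rintro rfl
        rcases hyx.lt_or_eq with h | h
        · exact hxmax x'' hx''S h
        · exact (Finset.mem_erase.mp hx'').1 h.symm
      have hEQ : DS a S = DS a S' ∪ (aSupp a x).powerset := by
        ext s
        simp only [DS, Finset.mem_filter, Finset.mem_univ, true_and,
          Finset.mem_union, Finset.mem_powerset]
        constructor
        · rintro ⟨y, hyS, hsub⟩
          by_cases hyx : y = x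
          · exact Or.inr (hyx ▸ hsub)
          · exact Or.inl ⟨y, Finset.mem_erase.mpr ⟨hyx, hyS⟩, hsub⟩
        · rintro (⟨y, hyS', hsub⟩ | hsub)
          · exact ⟨y, Finset.mem_of_mem_erase hyS', hsub⟩
          · exact ⟨x, hxS, hsub⟩
      have hIEQ : DS a S' ∩ (aSupp a x).powerset = deltaM a x := by
        ext s
        simp only [Finset.mem_inter, DS, Finset.mem_filter, Finset.mem_univ,
          true_and, Finset.mem_powerset, deltaM]
        constructor
        · rintro ⟨⟨y, hyS', hsuby⟩, hsubx⟩
          have hwL : s.sup a ∈ latticeL a := ⟨s, rfl⟩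
          have hwx : s.sup a ≤ x :=
            Finset.sup_le (fun i hi => (mem_aSupp a).mp (hsubx hi))
          have hwy : s.sup a ≤ y :=
            Finset.sup_le (fun i hi => (mem_aSupp a).mp (hsuby hi))
          have hwltx : s.sup a < x := by
            rcases hwx.lt_or_eq with h | h
            · exact h
            · exfalso
              rw [h] at hwy
              rcases hwy.lt_or_eq with h2 | h2
              · exact hxmax y (Finset.mem_of_mem_erase hyS') h2
              · exact (Finset.mem_erase.mp hyS').1 h2.symm
          obtain ⟨u, hcov, hwu⟩ := exists_cov a hwL hwltx
          exact ⟨u, hcov, fun i hi =>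
            (mem_aSupp a).mpr ((Finset.le_sup hi).trans hwu)⟩
        · rintro ⟨u, hcov, hsub⟩
          have hux : u < x := hcov.2.1
          have huS : u ∈ S := hdc x hxS u hcov.1 hux.le
          refine ⟨⟨u, Finset.mem_erase.mpr ⟨hux.ne, huS⟩, hsub⟩, fun i hi =>
            (mem_aSupp a).mpr (((mem_aSupp a).mp (hsub hi)).trans hux.le)⟩
      obtain ⟨c', rfl⟩ : ∃ c', c = c' + 1 := ⟨c - 1, by omega⟩
      rw [hEQ]
      have hC : ∀ w : Face (DS a S' ∩ (aSupp a x).powerset) (c' + 1) → k,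
          bdry k (DS a S' ∩ (aSupp a x).powerset) c' w = 0 →
          ∃ v, bdry k (DS a S' ∩ (aSupp a x).powerset) (c' + 1) v = w := by
        rw [hIEQ]
        exact Hyp x hxL hx0' (hSm x hxS) c' (by omega)
      exact mv_vanish (dclosed_DS a S') (dclosed_powerset (aSupp a x)) c'
        (ih S' (Finset.erase_ssubset hxS) hS'L hS'm hS'dc (c' + 1) (by omega))
        (fun z' hz' => simplex_acyclic hbsupp (c' + 1) z' hz')
        hC

section HtLemmas

variable {Δ : Finset (Finset (Fin r))}

lemma coef_singleton_empty (k : Type*) [Field k] (b : Fin r) :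
    bdryCoef k {b} (∅ : Finset (Fin r)) = 1 := by
  rw [bdryCoef, if_pos (Finset.empty_subset _), Finset.sdiff_empty, Finset.sum_singleton,
    Finset.filter_singleton, if_neg (lt_irrefl b), Finset.card_empty, pow_zero]

lemma ht_zero_of_only_empty (h0 : ∅ ∈ Δ) (hnov : ∀ s ∈ Δ, s = ∅) :
    HtNonzero k Δ 0 := by
  show LinearMap.range (bdry k Δ 0) ≠ ⊤
  intro htop
  have hmem : (fun _ => 1 : Face Δ 0 → k) ∈ LinearMap.range (bdry k Δ 0) := by
    rw [htop]; trivial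
  obtain ⟨g, hg⟩ := hmem
  have heval := congrFun hg ⟨∅, h0, Finset.card_empty⟩
  rw [bdry_apply] at heval
  have hempty : Δ.filter (fun s => s.card = 0 + 1) = ∅ := by
    rw [Finset.filter_eq_empty_iff]
    intro s hs
    rw [hnov s hs, Finset.card_empty]
    omega
  rw [hempty, Finset.sum_empty] at heval
  exact one_ne_zero heval.symm

lemma not_ht_zero_of_vertex (hdc : DClosed Δ) {b : Fin r} (hb : {b} ∈ Δ) :
    ¬ HtNonzero k Δ 0 := by
  show ¬ LinearMap.range (bdry k Δ 0) ≠ ⊤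
  rw [not_ne_iff, eq_top_iff]
  rintro f -
  have h0 : ∅ ∈ Δ := hdc _ hb ∅ (Finset.empty_subset _)
  set e0 : Face Δ 0 := ⟨∅, h0, Finset.card_empty⟩ with he0
  refine ⟨fun s => if s.1 = {b} then f e0 else 0, ?_⟩
  funext t
  have ht : t = e0 := Subtype.ext (Finset.card_eq_zero.mp t.2.2)
  rw [bdry_apply, ht]
  rw [Finset.sum_eq_single_of_mem {b}
    (Finset.mem_filter.mpr ⟨hb, Finset.card_singleton b⟩) ?van]
  · have hex : exChain (fun s : Face Δ (0+1) => if s.1 = {b} then f e0 else 0) {b}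
        = f e0 := by
      rw [exChain, dif_pos (⟨hb, Finset.card_singleton b⟩ : {b} ∈ Δ ∧ ({b} : Finset (Fin r)).card = 0 + 1)]
      exact if_pos rfl
    rw [hex]
    show bdryCoef k {b} (∅ : Finset (Fin r)) * f e0 = f e0
    rw [coef_singleton_empty, one_mul]
  case van =>
    intro s hs hne
    have hex : exChain (fun s : Face Δ (0+1) => if s.1 = {b} then f e0 else 0) s = 0 := by
      rw [exChain]
      by_cases hmem : s ∈ Δ ∧ s.card = 0 + 1
      · rw [dif_pos hmem]
        exact if_neg hne
      · exact dif_neg hmem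
    rw [hex, mul_zero]

lemma not_ht_succ_of_no_faces (c : ℕ) (h : ∀ s ∈ Δ, s.card ≠ c + 1) :
    ¬ HtNonzero k Δ (c + 1) := by
  show ¬ LinearMap.ker (bdry k Δ c) ≠ LinearMap.range (bdry k Δ (c + 1))
  rw [not_ne_iff]
  have hz : ∀ w : Face Δ (c + 1) → k, w = 0 :=
    fun w => funext fun s => absurd s.2.2 (h s.1 s.2.1)
  apply le_antisymm
  · intro w hw
    exact ⟨0, by rw [map_zero, hz w]⟩
  · intro w hw
    rw [LinearMap.mem_ker, hz w, map_zero]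

lemma not_ht_of_exact (hdc : DClosed Δ) (c : ℕ)
    (hexact : ∀ z : Face Δ (c + 1) → k, bdry k Δ c z = 0 →
      ∃ y, bdry k Δ (c + 1) y = z) :
    ¬ HtNonzero k Δ (c + 1) := by
  show ¬ LinearMap.ker (bdry k Δ c) ≠ LinearMap.range (bdry k Δ (c + 1))
  rw [not_ne_iff]
  apply le_antisymm
  · intro z hz
    rw [LinearMap.mem_ker] at hz
    exact hexact z hz
  · rintro z ⟨y, rfl⟩
    rw [LinearMap.mem_ker]
    exact bdry_bdry hdc c y

lemma exact_of_not_ht (c : ℕ) (h : ¬ HtNonzero k Δ (c + 1)) :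
    ∀ z : Face Δ (c + 1) → k, bdry k Δ c z = 0 → ∃ y, bdry k Δ (c + 1) y = z := by
  have h' : LinearMap.ker (bdry k Δ c) = LinearMap.range (bdry k Δ (c + 1)) :=
    not_ne_iff.mp h
  intro z hz
  have hmem : z ∈ LinearMap.ker (bdry k Δ c) := LinearMap.mem_ker.mpr hz
  rw [h'] at hmem
  exact hmem

end HtLemmas

lemma aSupp_zero_empty (a : Fin r → (Fin n → ℕ)) (hmin : ∀ i j, i ≠ j → ¬ a i ≤ a j)
    {m : Fin n → ℕ} (hmL : m ∈ latticeL a) (hm0 : m ≠ 0) : aSupp a 0 = ∅ := by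
  rw [Finset.eq_empty_iff_forall_notMem]
  intro i hi
  have hai0 : a i = 0 := le_antisymm ((mem_aSupp a).mp hi) (pi_zero_le _)
  by_cases hj : ∃ j, j ≠ i
  · obtain ⟨j, hj⟩ := hj
    exact hmin i j (fun h => hj h.symm) (hai0 ▸ pi_zero_le (a j))
  · push_neg at hj
    obtain ⟨A, hA⟩ := hmL
    have hsup : ∀ j ∈ A, a j ≤ 0 := fun j _ => by rw [hj j, hai0]
    exact hm0 (le_antisymm (hA ▸ Finset.sup_le hsup) (pi_zero_le m))

end Aux

/-- Let `M` be a homologically monotonic monomial ideal.  Then for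
every `m ≠ 1` in the Betti poset `B_M` (i.e. every `m ≠ 1` in `L_M` with
`H̃(Δ_m; k) ≠ 0`), the reduced homology of `Δ_m` is concentrated in a single degree:
there is a unique `c` with `H̃_{c−1}(Δ_m; k) ≠ 0`. -/
theorem homMonotonic_homology_concentrated (k : Type*) [Field k] {n r : ℕ}
    (a : Fin r → (Fin n → ℕ)) (hmin : ∀ i j, i ≠ j → ¬ a i ≤ a j)
    (hHM : HomMonotonic k a) :
    ∀ m ∈ latticeL a, m ≠ 0 → (∃ c, HtNonzero k (deltaM a m) c) →
      ∃ c, HtNonzero k (deltaM a m) c ∧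
        ∀ c', c' ≠ c → ¬ HtNonzero k (deltaM a m) c' := by
  intro m hmL hm0 hex
  have hm0pos : (0 : Fin n → ℕ) < m := lt_of_le_of_ne (pi_zero_le m) (Ne.symm hm0)
  have ha0 : aSupp a 0 = ∅ := aSupp_zero_empty a hmin hmL hm0
  by_cases hbet : ∃ w ∈ latticeL a, 0 < w ∧ w < m
  · -- there is a lattice element strictly between 0 and m
    obtain ⟨w0, hw0L, hw0pos, hw0m⟩ := hbet
    obtain ⟨b, hbw0⟩ := exists_atom_le a hw0L hw0pos.ne'
    obtain ⟨u, hcov, hw0u⟩ := exists_cov a hw0L hw0m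
    have hvert : ({b} : Finset (Fin r)) ∈ deltaM a m := by
      rw [deltaM, Finset.mem_filter]
      refine ⟨Finset.mem_univ _, u, hcov, fun i hi => ?_⟩
      rw [Finset.mem_singleton] at hi
      subst hi
      exact (mem_aSupp a).mpr (hbw0.trans hw0u)
    have hnot0 : ¬ HtNonzero k (deltaM a m) 0 :=
      not_ht_zero_of_vertex (dclosed_deltaM a m) hvert
    have hfind : HtNonzero k (deltaM a m) (Nat.find hex) := Nat.find_spec hex
    have hc0pos : 1 ≤ Nat.find hex := by
      rcases Nat.eq_zero_or_pos (Nat.find hex) with h | h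
      · rw [h] at hfind
        exact absurd hfind hnot0
      · exact h
    refine ⟨Nat.find hex, hfind, ?_⟩
    intro c' hne hc'
    have hgt : Nat.find hex + 1 ≤ c' := by
      have h1 : ¬ c' < Nat.find hex := fun h => Nat.find_min hex h hc'
      omega
    obtain ⟨d, rfl⟩ : ∃ d, c' = d + 1 := ⟨c' - 1, by omega⟩
    have Hyp : ∀ x, x ∈ latticeL a → 0 < x → x < m → ∀ c : ℕ, Nat.find hex ≤ c + 1 →
        ∀ w : Face (deltaM a x) (c + 1) → k, bdry k (deltaM a x) c w = 0 →
          ∃ v, bdry k (deltaM a x) (c + 1) v = w := by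
      intro x hxL hx0 hxm c hcc
      refine exact_of_not_ht c (fun hHt => ?_)
      have := hHM m hmL x hxL hx0 hxm (c + 1) (Nat.find hex) hHt hfind
      omega
    have hexact := key_vanish a ha0 m (Nat.find hex) hc0pos Hyp
      ((latticeF a).filter (fun x => x < m))
      (fun x hx => (mem_latticeF a).mp (Finset.mem_filter.mp hx).1)
      (fun x hx => (Finset.mem_filter.mp hx).2)
      (fun x hx y hyL hyx => Finset.mem_filter.mpr
        ⟨(mem_latticeF a).mpr hyL, lt_of_le_of_lt hyx (Finset.mem_filter.mp hx).2⟩)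
      d (by omega)
    have hnot : ¬ HtNonzero k (DS a ((latticeF a).filter (fun x => x < m))) (d + 1) :=
      not_ht_of_exact (dclosed_DS a _) d hexact
    rw [← deltaM_eq_DS a m] at hnot
    exact hnot hc'
  · -- the crosscut complex of m is {∅}
    push_neg at hbet
    have hcov0 : covIn a 0 m := by
      refine ⟨zero_mem_latticeL a, hm0pos, fun w hw hww => ?_⟩
      exact hbet w hw hww.1 hww.2
    have hD : deltaM a m = {∅} := by
      ext s
      simp only [deltaM, Finset.mem_filter, Finset.mem_univ, true_and,
        Finset.mem_singleton]
      constructor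
      · rintro ⟨u, hcov, hsub⟩
        have hu0 : u = 0 := by
          by_contra h
          exact hbet u hcov.1 (lt_of_le_of_ne (pi_zero_le u) (Ne.symm h)) hcov.2.1
        rw [hu0, ha0, Finset.subset_empty] at hsub
        exact hsub
      · rintro rfl
        exact ⟨0, hcov0, Finset.empty_subset _⟩
    refine ⟨0, ?_, ?_⟩
    · rw [hD]
      exact ht_zero_of_only_empty (Finset.mem_singleton_self ∅)
        (fun s hs => Finset.mem_singleton.mp hs)
    · intro c' hc'
      obtain ⟨d, rfl⟩ : ∃ d, c' = d + 1 := ⟨c' - 1, by omega⟩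
      rw [hD]
      refine not_ht_succ_of_no_faces d (fun s hs => ?_)
      rw [Finset.mem_singleton.mp hs, Finset.card_empty]
      omega
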